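/- For rows a₁, …, a_m of a matrix A (all nonzero) and any z ∈ ℝⁿ, ∑_{i=1}^m (‖a_i‖²/‖A‖_F²) · (⟨a_i, z⟩²/‖a_i‖²) = ‖Az‖²/‖A‖_F² ≥ ‖z‖²/(‖A⁻¹‖²‖A‖_F²) = ‖z‖²/R, provided A has full column rank. -/

import Mathlib

open Finset

/-- Euclidean norm on `Fin k → ℝ`. -/
noncomputable def euclidNorm {k : ℕ} (v : Fin k → ℝ) : ℝ := Real.sqrt (∑ j, v j ^ 2)

/-- Standard inner product on `Fin k → ℝ`. -/
noncomputable def ip {k : ℕ} (v w : Fin k → ℝ) : ℝ := ∑ j, v j * w j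

/-- Frobenius norm of a matrix. -/
noncomputable def frob {m n : ℕ} (A : Matrix (Fin m) (Fin n) ℝ) : ℝ :=
  Real.sqrt (∑ i, ∑ j, A i j ^ 2)

/-- `‖A⁻¹‖ = inf {M : M‖Az‖ ≥ ‖z‖ for all z}`. -/
noncomputable def invNorm {m n : ℕ} (A : Matrix (Fin m) (Fin n) ℝ) : ℝ :=
  sInf {M : ℝ | ∀ z : Fin n → ℝ, euclidNorm z ≤ M * euclidNorm (A.mulVec z)}

lemma euclidNorm_sq {k : ℕ} (v : Fin k → ℝ) : euclidNorm v ^ 2 = ∑ j, v j ^ 2 := by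
  rw [euclidNorm, Real.sq_sqrt (Finset.sum_nonneg fun j _ => sq_nonneg _)]

lemma euclidNorm_nonneg {k : ℕ} (v : Fin k → ℝ) : 0 ≤ euclidNorm v := Real.sqrt_nonneg _

lemma euclidNorm_ne_zero {k : ℕ} {v : Fin k → ℝ} (hv : v ≠ 0) : euclidNorm v ≠ 0 := by
  have : ∃ j, v j ≠ 0 := by
    by_contra h; push_neg at h; exact hv (funext h)
  obtain ⟨j, hj⟩ := this
  have hpos : 0 < ∑ j, v j ^ 2 :=
    Finset.sum_pos' (fun i _ => sq_nonneg _) ⟨j, Finset.mem_univ j, by positivity⟩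
  rw [euclidNorm]
  positivity

lemma euclidNorm_eq_norm {k : ℕ} (v : Fin k → ℝ) :
    euclidNorm v = ‖(EuclideanSpace.equiv (Fin k) ℝ).symm v‖ := by
  rw [EuclideanSpace.norm_eq, euclidNorm]
  congr 1
  exact Finset.sum_congr rfl fun j _ => by rw [Real.norm_eq_abs, sq_abs]; rfl

/-- Key computation behind the one-step contraction: the expected squared normalized
residual equals `‖Az‖²/‖A‖_F²` and is at least `‖z‖²/R`. -/
theorem stmt_15 (m n : ℕ) (A : Matrix (Fin m) (Fin n) ℝ) (hrank : A.rank = n)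
    (hrows : ∀ i, A i ≠ 0) (z : Fin n → ℝ) :
    (∑ i, (euclidNorm (A i) ^ 2 / frob A ^ 2) * (ip (A i) z ^ 2 / euclidNorm (A i) ^ 2) =
        euclidNorm (A.mulVec z) ^ 2 / frob A ^ 2) ∧
      euclidNorm z ^ 2 / (invNorm A ^ 2 * frob A ^ 2) ≤ euclidNorm (A.mulVec z) ^ 2 / frob A ^ 2 := by
  constructor
  · have h1 : ∀ i, (euclidNorm (A i) ^ 2 / frob A ^ 2) * (ip (A i) z ^ 2 / euclidNorm (A i) ^ 2)
        = ip (A i) z ^ 2 / frob A ^ 2 := by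
      intro i
      have h0 := euclidNorm_ne_zero (hrows i)
      have h2 : euclidNorm (A i) ^ 2 * (euclidNorm (A i))⁻¹ ^ 2 = 1 := by
        rw [← mul_pow, mul_inv_cancel₀ h0, one_pow]
      field_simp
    simp_rw [h1]
    rw [← Finset.sum_div, euclidNorm_sq]
    congr 1
  · have hinj : Function.Injective A.mulVecLin := by
      rw [← LinearMap.ker_eq_bot]
      have h := LinearMap.finrank_range_add_finrank_ker A.mulVecLin
      rw [← Matrix.rank, hrank] at h
      simp only [Module.finrank_pi, Fintype.card_fin] at h
      have : Module.finrank ℝ (LinearMap.ker A.mulVecLin) = 0 := by omega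
      exact Submodule.finrank_eq_zero.mp this
    set f : EuclideanSpace ℝ (Fin n) →ₗ[ℝ] EuclideanSpace ℝ (Fin m) :=
      ((EuclideanSpace.equiv (Fin m) ℝ).symm : (Fin m → ℝ) →ₗ[ℝ] EuclideanSpace ℝ (Fin m)) ∘ₗ
        A.mulVecLin ∘ₗ ((EuclideanSpace.equiv (Fin n) ℝ) : EuclideanSpace ℝ (Fin n) →ₗ[ℝ] (Fin n → ℝ)) with hf
    have hinjf : LinearMap.ker f = ⊥ := LinearMap.ker_eq_bot.mpr
      ((EuclideanSpace.equiv (Fin m) ℝ).symm.injective.comp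
        (hinj.comp (EuclideanSpace.equiv (Fin n) ℝ).injective))
    obtain ⟨K, hK0, hK⟩ := f.exists_antilipschitzWith hinjf
    have hmem : (K : ℝ) ∈ {M : ℝ | ∀ z : Fin n → ℝ, euclidNorm z ≤ M * euclidNorm (A.mulVec z)} := by
      intro w
      have h2 := hK.le_mul_dist ((EuclideanSpace.equiv (Fin n) ℝ).symm w) 0
      simp only [map_zero, dist_zero_right] at h2
      rw [euclidNorm_eq_norm, euclidNorm_eq_norm]
      exact h2
    have hne : {M : ℝ | ∀ z : Fin n → ℝ, euclidNorm z ≤ M * euclidNorm (A.mulVec z)}.Nonempty := ⟨_, hmem⟩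
    have key : euclidNorm z ≤ invNorm A * euclidNorm (A.mulVec z) := by
      by_cases hc : euclidNorm (A.mulVec z) = 0
      · have hz : euclidNorm z = 0 := le_antisymm (by
          have := hmem z; rw [hc, mul_zero] at this; exact this) (euclidNorm_nonneg _)
        rw [hz, hc, mul_zero]
      · have hcpos : 0 < euclidNorm (A.mulVec z) :=
          lt_of_le_of_ne (euclidNorm_nonneg _) (Ne.symm hc)
        have hlb : euclidNorm z / euclidNorm (A.mulVec z) ≤ invNorm A := by
          apply le_csInf hne
          intro M hM
          rw [div_le_iff₀ hcpos]
          exact hM z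
        calc euclidNorm z = (euclidNorm z / euclidNorm (A.mulVec z)) * euclidNorm (A.mulVec z) := by
              field_simp
          _ ≤ invNorm A * euclidNorm (A.mulVec z) :=
              mul_le_mul_of_nonneg_right hlb hcpos.le
    have hsq : euclidNorm z ^ 2 ≤ invNorm A ^ 2 * euclidNorm (A.mulVec z) ^ 2 := by
      have := pow_le_pow_left₀ (euclidNorm_nonneg z) key 2
      rwa [mul_pow] at this
    by_cases hd : invNorm A ^ 2 * frob A ^ 2 = 0
    · rw [hd, div_zero]
      exact div_nonneg (sq_nonneg _) (sq_nonneg _)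
    · have hI : invNorm A ^ 2 ≠ 0 := fun h => hd (by rw [h, zero_mul])
      have hF : frob A ^ 2 ≠ 0 := fun h => hd (by rw [h, mul_zero])
      have hIpos : 0 < invNorm A ^ 2 := (sq_nonneg _).lt_of_ne (Ne.symm hI)
      have hFpos : 0 < frob A ^ 2 := (sq_nonneg _).lt_of_ne (Ne.symm hF)
      rw [div_le_div_iff₀ (by positivity) hFpos]
      nlinarith [hsq, hFpos]
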